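/- Let d ≥ 1, let 0 ≤ i ≤ d − 1 be an integer, let ε > 0, and set l_j := (d − j)·ε for integers j. Let S₁ and S₂ be two distinct linear subspaces of ℝ^d, each spanned by exactly i vectors from the standard orthonormal basis {e₁, …, e_d}, and let I := S₁ ∩ S₂. Define S_t' := N_i^∞(S_t) \ N_{i−1}^∞(I) for t = 1, 2, where N_j^∞(A) := {x ∈ ℝ^d : ∃ a ∈ A, ‖x − a‖_∞ ≤ l_j}. Then for every x ∈ S₁' and y ∈ S₂', the Euclidean distance satisfies ‖x − y‖₂ ≥ √2 · ε. -/

import Mathlib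

/-- The coordinate subspace of `ℝ^d` spanned by the standard basis vectors
`e_k` with `k ∈ A` (as a set): all points vanishing outside `A`. -/
def coordSubspace (d : ℕ) (A : Finset (Fin d)) : Set (EuclideanSpace ℝ (Fin d)) :=
  {x | ∀ k ∉ A, x k = 0}

/-- The `ℓ∞`-neighborhood of radius `l` of a set `S ⊆ ℝ^d`:
all `x` with `‖x − a‖_∞ ≤ l` for some `a ∈ S`. -/
def linfNbhd (d : ℕ) (l : ℝ) (S : Set (EuclideanSpace ℝ (Fin d))) :
    Set (EuclideanSpace ℝ (Fin d)) :=
  {x | ∃ a ∈ S, ∀ k, |x k - a k| ≤ l}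

lemma stmt_10_aux (d : ℕ) (i : ℕ) (ε : ℝ) (hε : 0 < ε) (h0 : (0:ℝ) ≤ (d:ℝ) - i)
    (A₁ A₂ : Finset (Fin d))
    (x : EuclideanSpace ℝ (Fin d))
    (hx : x ∈ linfNbhd d (((d : ℝ) - i) * ε) (coordSubspace d A₁) \
        linfNbhd d (((d : ℝ) - i + 1) * ε) (coordSubspace d A₁ ∩ coordSubspace d A₂)) :
    ∃ k, k ∈ A₁ ∧ k ∉ A₂ ∧ ((d : ℝ) - i + 1) * ε < |x k| := by
  obtain ⟨⟨a, ha, hxa⟩, hx2⟩ := hx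
  have hout : ∀ k, k ∉ A₁ → |x k| ≤ ((d : ℝ) - i) * ε := by
    intro k hk
    have := hxa k
    rw [ha k hk, sub_zero] at this
    exact this
  by_contra h
  push_neg at h
  apply hx2
  refine ⟨WithLp.toLp 2 (fun k => if k ∈ A₁ ∧ k ∈ A₂ then x k else 0), ⟨?_, ?_⟩, ?_⟩
  · intro k hk
    simp only [PiLp.toLp_apply]
    rw [if_neg (fun hc => hk hc.1)]
  · intro k hk
    simp only [PiLp.toLp_apply]
    rw [if_neg (fun hc => hk hc.2)]
  · intro k
    by_cases hk : k ∈ A₁ ∧ k ∈ A₂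
    · simp [hk]
      nlinarith
    · simp only [PiLp.toLp_apply, if_neg hk, sub_zero]
      by_cases hk1 : k ∈ A₁
      · have hk2 : k ∉ A₂ := fun hc => hk ⟨hk1, hc⟩
        exact h k hk1 hk2
      · have := hout k hk1
        nlinarith

/-- Let `0 ≤ i ≤ d−1`, `ε > 0`, `l_j := (d−j)ε`. For two
distinct coordinate subspaces `S₁, S₂` each spanned by exactly `i` standard
basis vectors, with `I := S₁ ∩ S₂` and `S_t' := N_i^∞(S_t) \ N_{i−1}^∞(I)`,
every `x ∈ S₁'` and `y ∈ S₂'` satisfy `‖x − y‖₂ ≥ √2 · ε`. -/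
theorem stmt_10 (d : ℕ) (hd : 1 ≤ d) (i : ℕ) (hi : i ≤ d - 1)
    (ε : ℝ) (hε : 0 < ε)
    (A₁ A₂ : Finset (Fin d)) (hA₁ : A₁.card = i) (hA₂ : A₂.card = i) (hA : A₁ ≠ A₂)
    (x y : EuclideanSpace ℝ (Fin d))
    (hx : x ∈ linfNbhd d (((d : ℝ) - i) * ε) (coordSubspace d A₁) \
        linfNbhd d (((d : ℝ) - i + 1) * ε) (coordSubspace d A₁ ∩ coordSubspace d A₂))
    (hy : y ∈ linfNbhd d (((d : ℝ) - i) * ε) (coordSubspace d A₂) \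
        linfNbhd d (((d : ℝ) - i + 1) * ε) (coordSubspace d A₁ ∩ coordSubspace d A₂)) :
    Real.sqrt 2 * ε ≤ dist x y := by
  have h0 : (0:ℝ) ≤ (d:ℝ) - i := by
    have : i + 1 ≤ d := by omega
    have := Nat.cast_le (α := ℝ) |>.mpr this
    push_cast at this; linarith
  obtain ⟨k₁, hk₁A, hk₁B, hxk₁⟩ := stmt_10_aux d i ε hε h0 A₁ A₂ x hx
  have hy' : y ∈ linfNbhd d (((d : ℝ) - i) * ε) (coordSubspace d A₂) \
      linfNbhd d (((d : ℝ) - i + 1) * ε) (coordSubspace d A₂ ∩ coordSubspace d A₁) := by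
    rwa [Set.inter_comm (coordSubspace d A₂)]
  obtain ⟨k₂, hk₂A, hk₂B, hyk₂⟩ := stmt_10_aux d i ε hε h0 A₂ A₁ y hy'
  have hne : k₁ ≠ k₂ := fun h => hk₁B (h ▸ hk₂A)
  -- bounds on the other point's coordinates
  obtain ⟨⟨a1, ha1, hxa1⟩, -⟩ := hx
  obtain ⟨⟨a2, ha2, hya2⟩, -⟩ := hy
  have hyk₁ : |y k₁| ≤ ((d : ℝ) - i) * ε := by
    have := hya2 k₁; rwa [ha2 k₁ hk₁B, sub_zero] at this
  have hxk₂ : |x k₂| ≤ ((d : ℝ) - i) * ε := by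
    have := hxa1 k₂; rwa [ha1 k₂ hk₂B, sub_zero] at this
  have h1 : ε < |x k₁ - y k₁| := by
    have := abs_sub_abs_le_abs_sub (x k₁) (y k₁)
    linarith
  have h2 : ε < |x k₂ - y k₂| := by
    have h := abs_sub_abs_le_abs_sub (y k₂) (x k₂)
    have : |y k₂ - x k₂| = |x k₂ - y k₂| := abs_sub_comm _ _
    linarith
  have hd2 : Real.sqrt 2 * ε = Real.sqrt (2 * ε ^ 2) := by
    rw [Real.sqrt_mul (by norm_num), Real.sqrt_sq hε.le]
  rw [EuclideanSpace.dist_eq, hd2]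
  apply Real.sqrt_le_sqrt
  have hsub : ({k₁, k₂} : Finset (Fin d)) ⊆ Finset.univ := Finset.subset_univ _
  have hsum : ∑ k ∈ ({k₁, k₂} : Finset (Fin d)), dist (x k) (y k) ^ 2 ≤
      ∑ k, dist (x k) (y k) ^ 2 :=
    Finset.sum_le_sum_of_subset_of_nonneg hsub (fun k _ _ => sq_nonneg _)
  rw [Finset.sum_pair hne] at hsum
  have e1 : dist (x k₁) (y k₁) = |x k₁ - y k₁| := Real.dist_eq _ _
  have e2 : dist (x k₂) (y k₂) = |x k₂ - y k₂| := Real.dist_eq _ _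
  nlinarith [sq_nonneg (x k₁ - y k₁), sq_nonneg (x k₂ - y k₂), abs_nonneg (x k₁ - y k₁), abs_nonneg (x k₂ - y k₂)]
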